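/- Let M = M[A] over GF(p), T ⊆ E, and M_T = M[A_T]. A circuit C of M with C ∩ T ≠ ∅ is a circuit of M_T if and only if for some (equivalently, every) linear dependence Σ_{x∈C} α_x x = 0 over GF(p) with all α_x ≠ 0, one has Σ_{x∈C∩T} α_x ≡ 0 (mod p). -/
import Mathlib


open Set

/-- A subset `S` of the column index set `E` is independent in the vector matroid of the
matrix with columns `A` over `GF(p)` iff the corresponding columns are linearly independent. -/
def MatIndep (p : ℕ) {E : Type} {n : ℕ} (A : E → (Fin n → ZMod p)) (S : Set E) : Prop :=
  LinearIndependent (ZMod p) (fun x : S => A x.1)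

/-- A circuit is a minimal dependent set. -/
def MatCircuit (p : ℕ) {E : Type} {n : ℕ} (A : E → (Fin n → ZMod p)) (C : Set E) : Prop :=
  ¬ MatIndep p A C ∧ ∀ D : Set E, D ⊂ C → MatIndep p A D

/-- The rank of a set of columns: the dimension of their span (equivalently, the maximum
size of an independent subset). -/
noncomputable def matRank (p : ℕ) {E : Type} {n : ℕ} (A : E → (Fin n → ZMod p)) (S : Set E) : ℕ :=
  Module.finrank (ZMod p) (Submodule.span (ZMod p) (A '' S))

/-- The matrix `A_T`: adjoin to `A` an extra row equal to the indicator vector of `T`. -/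
noncomputable def splitMat (p : ℕ) {E : Type} {n : ℕ} (A : E → (Fin n → ZMod p)) (T : Set E) :
    E → (Fin (n + 1) → ZMod p) :=
  fun e => Fin.snoc (A e) (T.indicator (fun _ => (1 : ZMod p)) e)

/-- The matrix `A'_T`: adjoin to `A_T` an extra column `z` (modeled as `none`) whose only
nonzero entry is a `1` in the new last row. -/
noncomputable def elSplitMat (p : ℕ) {E : Type} {n : ℕ} (A : E → (Fin n → ZMod p)) (T : Set E) :
    Option E → (Fin (n + 1) → ZMod p) :=
  fun o => o.elim (Fin.snoc (0 : Fin n → ZMod p) 1) (splitMat p A T)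

/-- An `NPT`-circuit of `M = M[A]`: a circuit of `M` meeting `T` that is independent in
`M_T = M[A_T]` (i.e. not a circuit of `M_T`). -/
def NPTCircuit (p : ℕ) {E : Type} {n : ℕ} (A : E → (Fin n → ZMod p)) (T : Set E)
    (C : Set E) : Prop :=
  MatCircuit p A C ∧ (C ∩ T).Nonempty ∧ MatIndep p (splitMat p A T) C

/-- A basis: a maximal independent set. -/
def MatBasis (p : ℕ) {E : Type} {n : ℕ} (A : E → (Fin n → ZMod p)) (B : Set E) : Prop :=
  MatIndep p A B ∧ ∀ S : Set E, MatIndep p A S → B ⊆ S → S = B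

/-- A cocircuit: a minimal set meeting every basis. -/
def MatCocircuit (p : ℕ) {E : Type} {n : ℕ} (A : E → (Fin n → ZMod p)) (T : Set E) : Prop :=
  (∀ B : Set E, MatBasis p A B → (T ∩ B).Nonempty) ∧
    ∀ T' : Set E, T' ⊂ T → ¬ ∀ B : Set E, MatBasis p A B → (T' ∩ B).Nonempty

/-- Connectedness of the vector matroid of `A`: there is no partition `(X, Xᶜ)` of the
ground set into nonempty sets with `r X + r Xᶜ ≤ r E`. -/
def MatConnected (p : ℕ) {E : Type} {n : ℕ} (A : E → (Fin n → ZMod p)) : Prop :=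
  ∀ X : Set E, X.Nonempty → Xᶜ.Nonempty →
    matRank p A Set.univ < matRank p A X + matRank p A Xᶜ

private lemma matIndep_iff_sum {p m : ℕ} [Fact p.Prime] {E : Type}
    (B : E → (Fin m → ZMod p)) (C : Finset E) :
    MatIndep p B (↑C : Set E) ↔
      ∀ α : E → ZMod p, (∑ x ∈ C, α x • B x = 0) → ∀ x ∈ C, α x = 0 := by
  rw [MatIndep, Fintype.linearIndependent_iff]
  constructor
  · intro h α hsum x hx
    rw [← Finset.sum_finset_coe (f := fun x => α x • B x)] at hsum
    exact h (fun i => α i) hsum ⟨x, Finset.mem_coe.mpr hx⟩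
  · intro h g hg i
    classical
    set α : E → ZMod p := fun x => if hx : x ∈ C then g ⟨x, Finset.mem_coe.mpr hx⟩ else 0 with hα
    have h1 : ∀ j : (↑C : Set E), α j = g j := by
      intro j
      have hj : (j : E) ∈ C := Finset.mem_coe.mp j.2
      simp only [hα, dif_pos hj]
    have hsum : ∑ x ∈ C, α x • B x = 0 := by
      rw [← Finset.sum_finset_coe (f := fun x => α x • B x), ← hg]
      exact Finset.sum_congr rfl fun j _ => by rw [h1]
    have := h α hsum i (Finset.mem_coe.mp i.2)
    rwa [h1] at this

private lemma fullsupp_of_dep {p n : ℕ} [Fact p.Prime] {E : Type} {A : E → (Fin n → ZMod p)}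
    {C : Finset E} (hC : MatCircuit p A (↑C : Set E)) {α : E → ZMod p}
    (hsum : ∑ x ∈ C, α x • A x = 0) {x₀ : E} (hx₀ : x₀ ∈ C) (hx₀ne : α x₀ ≠ 0) :
    ∀ x ∈ C, α x ≠ 0 := by
  classical
  by_contra h
  push_neg at h
  obtain ⟨x₁, hx₁C, hx₁⟩ := h
  set D := C.filter (fun x => α x ≠ 0) with hD
  have hDsub : D ⊆ C := Finset.filter_subset _ _
  have hDss : D ⊂ C := (Finset.ssubset_iff_of_subset hDsub).mpr
    ⟨x₁, hx₁C, by simp [hD, hx₁]⟩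
  have hind := hC.2 (↑D) (Finset.coe_ssubset.mpr hDss)
  have hsumD : ∑ x ∈ D, α x • A x = 0 := by
    rw [Finset.sum_subset hDsub (fun x _ hx => by
      have : α x = 0 := by by_contra hne; exact hx (Finset.mem_filter.mpr ⟨‹x ∈ C›, hne⟩)
      rw [this, zero_smul])]
    exact hsum
  exact hx₀ne ((matIndep_iff_sum A D).mp hind α hsumD x₀
    (Finset.mem_filter.mpr ⟨hx₀, hx₀ne⟩))

private lemma circuit_scalar {p n : ℕ} [Fact p.Prime] {E : Type} {A : E → (Fin n → ZMod p)}
    {C : Finset E} (hC : MatCircuit p A (↑C : Set E)) {α β : E → ZMod p}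
    (hα : ∀ x ∈ C, α x ≠ 0) (hαs : ∑ x ∈ C, α x • A x = 0)
    (hβs : ∑ x ∈ C, β x • A x = 0) {x₀ : E} (hx₀ : x₀ ∈ C) :
    ∀ x ∈ C, β x = (β x₀ * (α x₀)⁻¹) * α x := by
  classical
  set c := β x₀ * (α x₀)⁻¹ with hc
  set γ : E → ZMod p := fun x => β x - c * α x with hγ
  have hγ0 : γ x₀ = 0 := by
    simp only [hγ, hc, mul_assoc, inv_mul_cancel₀ (hα x₀ hx₀), mul_one, sub_self]
  have hγs : ∑ x ∈ C, γ x • A x = 0 := by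
    have : ∑ x ∈ C, γ x • A x
        = (∑ x ∈ C, β x • A x) - c • ∑ x ∈ C, α x • A x := by
      rw [Finset.smul_sum, ← Finset.sum_sub_distrib]
      exact Finset.sum_congr rfl fun x _ => by rw [hγ, sub_smul, smul_smul]
    rw [this, hαs, hβs, smul_zero, sub_zero]
  have hDss : (↑(C.erase x₀) : Set E) ⊂ ↑C := Finset.coe_ssubset.mpr (Finset.erase_ssubset hx₀)
  have hind := hC.2 _ hDss
  have hsumD : ∑ x ∈ C.erase x₀, γ x • A x = 0 := by
    rw [Finset.sum_erase _ (by rw [hγ0, zero_smul])]; exact hγs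
  have hγD := (matIndep_iff_sum A (C.erase x₀)).mp hind γ hsumD
  intro x hx
  rcases eq_or_ne x x₀ with rfl | hne
  · have := hγ0; rw [hγ] at this; linear_combination this
  · have := hγD x (Finset.mem_erase.mpr ⟨hne, hx⟩)
    rw [hγ] at this; linear_combination this

private lemma matIndep_split' {p n : ℕ} [Fact p.Prime] {E : Type} (A : E → (Fin n → ZMod p))
    (T : Set E) {D : Set E} (h : MatIndep p A D) : MatIndep p (splitMat p A T) D := by
  have hπ : (fun x : D => A x.1) =
      (LinearMap.funLeft (ZMod p) (ZMod p) (Fin.castSucc : Fin n → Fin (n+1))) ∘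
        (fun x : D => splitMat p A T x.1) := by
    funext x; funext i
    simp [LinearMap.funLeft_apply, splitMat, Fin.snoc_castSucc]
  rw [MatIndep] at h ⊢
  rw [hπ] at h
  exact LinearIndependent.of_comp _ h

private lemma split_sum_eq {p n : ℕ} [Fact p.Prime] {E : Type} (A : E → (Fin n → ZMod p))
    (T : Set E) [DecidablePred (· ∈ T)] (C : Finset E) (α : E → ZMod p) :
    ∑ x ∈ C, α x • splitMat p A T x =
      Fin.snoc (∑ x ∈ C, α x • A x) (∑ x ∈ C.filter (· ∈ T), α x) := by
  funext i
  refine Fin.lastCases ?_ (fun j => ?_) i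
  · simp [Finset.sum_apply, splitMat, Set.indicator_apply, Finset.sum_filter, mul_ite]
  · simp [Finset.sum_apply, splitMat, Fin.snoc_castSucc]

private lemma snoc_eq_zero_iff {p n : ℕ} (f : Fin n → ZMod p) (a : ZMod p) :
    (Fin.snoc f a : Fin (n+1) → ZMod p) = 0 ↔ f = 0 ∧ a = 0 := by
  constructor
  · intro h
    constructor
    · funext i
      have := congrFun h (Fin.castSucc i)
      simpa [Fin.snoc_castSucc] using this
    · have := congrFun h (Fin.last n)
      simpa [Fin.snoc_last] using this
  · rintro ⟨rfl, rfl⟩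
    funext i
    refine Fin.lastCases ?_ (fun j => ?_) i <;> simp

theorem circuit_split_iff_coeff_sum {p n : ℕ} [Fact p.Prime] {E : Type}
    (A : E → (Fin n → ZMod p)) (T : Set E) [DecidablePred (· ∈ T)]
    (C : Finset E) (hC : MatCircuit p A (↑C : Set E)) (hCT : ((↑C : Set E) ∩ T).Nonempty) :
    (MatCircuit p (splitMat p A T) (↑C : Set E) ↔
      ∀ α : E → ZMod p, (∀ x ∈ C, α x ≠ 0) → (∑ x ∈ C, α x • A x = 0) →
        ∑ x ∈ C.filter (· ∈ T), α x = 0) ∧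
    (MatCircuit p (splitMat p A T) (↑C : Set E) ↔
      ∃ α : E → ZMod p, (∀ x ∈ C, α x ≠ 0) ∧ (∑ x ∈ C, α x • A x = 0) ∧
        ∑ x ∈ C.filter (· ∈ T), α x = 0) := by
  classical
  obtain ⟨x₀, hx₀C', hx₀T⟩ := hCT
  have hx₀C : x₀ ∈ C := Finset.mem_coe.mp hx₀C'
  -- a full-support dependence exists
  obtain ⟨α₀, hα₀sum, hα₀ne⟩ : ∃ α : E → ZMod p,
      (∑ x ∈ C, α x • A x = 0) ∧ ∀ x ∈ C, α x ≠ 0 := by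
    have hdep := hC.1
    rw [matIndep_iff_sum] at hdep
    push_neg at hdep
    obtain ⟨α, hsum, x₁, hx₁C, hx₁⟩ := hdep
    exact ⟨α, hsum, fullsupp_of_dep hC hsum hx₁C hx₁⟩
  -- circuit of splitMat ↔ dependent in splitMat
  have hcirc_iff : MatCircuit p (splitMat p A T) (↑C : Set E) ↔
      ¬ MatIndep p (splitMat p A T) (↑C : Set E) := by
    constructor
    · exact fun h => h.1
    · exact fun h => ⟨h, fun D hD => matIndep_split' A T (hC.2 D hD)⟩
  -- dependent in splitMat ↔ ∃ version
  have hdep_iff : ¬ MatIndep p (splitMat p A T) (↑C : Set E) ↔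
      ∃ α : E → ZMod p, (∀ x ∈ C, α x ≠ 0) ∧ (∑ x ∈ C, α x • A x = 0) ∧
        ∑ x ∈ C.filter (· ∈ T), α x = 0 := by
    rw [matIndep_iff_sum]
    push_neg
    constructor
    · rintro ⟨α, hsum, x₁, hx₁C, hx₁⟩
      rw [split_sum_eq, snoc_eq_zero_iff] at hsum
      exact ⟨α, fullsupp_of_dep hC hsum.1 hx₁C hx₁, hsum.1, hsum.2⟩
    · rintro ⟨α, hne, hsum, hfil⟩
      refine ⟨α, ?_, x₀, hx₀C, hne x₀ hx₀C⟩
      rw [split_sum_eq, snoc_eq_zero_iff]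
      exact ⟨hsum, hfil⟩
  -- ∃ version ↔ ∀ version
  have hEA : (∃ α : E → ZMod p, (∀ x ∈ C, α x ≠ 0) ∧ (∑ x ∈ C, α x • A x = 0) ∧
        ∑ x ∈ C.filter (· ∈ T), α x = 0) ↔
      (∀ α : E → ZMod p, (∀ x ∈ C, α x ≠ 0) → (∑ x ∈ C, α x • A x = 0) →
        ∑ x ∈ C.filter (· ∈ T), α x = 0) := by
    constructor
    · rintro ⟨α, hne, hsum, hfil⟩ β hβne hβsum
      obtain hsc := circuit_scalar hC hne hsum hβsum hx₀C
      calc ∑ x ∈ C.filter (· ∈ T), β x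
          = ∑ x ∈ C.filter (· ∈ T), (β x₀ * (α x₀)⁻¹) * α x :=
            Finset.sum_congr rfl fun x hx => hsc x (Finset.mem_filter.mp hx).1
        _ = (β x₀ * (α x₀)⁻¹) * ∑ x ∈ C.filter (· ∈ T), α x := by
            rw [Finset.mul_sum]
        _ = 0 := by rw [hfil, mul_zero]
    · intro h
      exact ⟨α₀, hα₀ne, hα₀sum, h α₀ hα₀ne hα₀sum⟩
  constructor
  · rw [hcirc_iff, hdep_iff, hEA]
  · rw [hcirc_iff, hdep_iff]
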